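/- Let X̂ ∈ ℝ^{n×m}, y ∈ ℝ^m, ε ≥ 0 and λ ≥ 0. Then the robust square-root LASSO optimal value min_{w ∈ ℝ^n} max_{Δ ∈ ℝ^{n×m}, ‖Δ‖ ≤ ε} ‖(X̂ + Δ)ᵀ w − y‖₂ + λ‖w‖₁ equals the optimal value of the regularized problem min_{w ∈ ℝ^n} ‖X̂ᵀ w − y‖₂ + ε‖w‖₂ + λ‖w‖₁, i.e. the infima over w of the two objectives coincide. -/

import Mathlib

open Matrix

/-- Euclidean norm of a vector in `ℝ^n`. -/
noncomputable def norm2 {n : ℕ} (x : Fin n → ℝ) : ℝ := Real.sqrt (∑ i, x i ^ 2)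

/-- ℓ1 norm of a vector in `ℝ^n`. -/
noncomputable def norm1 {n : ℕ} (x : Fin n → ℝ) : ℝ := ∑ i, |x i|

/-- Spectral norm (ℓ2→ℓ2 operator norm, i.e. largest singular value) of a matrix
`Δ ∈ ℝ^{n×m}`, acting on vectors `x ∈ ℝ^m`. -/
noncomputable def specNorm {n m : ℕ} (Δ : Matrix (Fin n) (Fin m) ℝ) : ℝ :=
  sSup {t : ℝ | ∃ x : Fin m → ℝ, norm2 x ≤ 1 ∧ t = norm2 (Δ.mulVec x)}

namespace RobustLasso

lemma norm2_eq_norm {k : ℕ} (x : Fin k → ℝ) :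
    norm2 x = ‖(WithLp.equiv 2 (Fin k → ℝ)).symm x‖ := by
  simp [norm2, EuclideanSpace.norm_eq, sq_abs]

lemma norm2_nonneg {k : ℕ} (x : Fin k → ℝ) : 0 ≤ norm2 x := Real.sqrt_nonneg _

lemma norm2_add_le {k : ℕ} (x y : Fin k → ℝ) : norm2 (x + y) ≤ norm2 x + norm2 y := by
  simp only [norm2_eq_norm]
  exact norm_add_le ((WithLp.equiv 2 (Fin k → ℝ)).symm x) ((WithLp.equiv 2 (Fin k → ℝ)).symm y)

lemma norm2_smul {k : ℕ} (c : ℝ) (x : Fin k → ℝ) : norm2 (c • x) = |c| * norm2 x := by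
  simp only [norm2_eq_norm]
  rw [show (WithLp.equiv 2 (Fin k → ℝ)).symm (c • x)
      = c • (WithLp.equiv 2 (Fin k → ℝ)).symm x from rfl]
  simp [norm_smul]

lemma cs {k : ℕ} (x y : Fin k → ℝ) : ∑ i, x i * y i ≤ norm2 x * norm2 y := by
  have := real_inner_le_norm ((WithLp.equiv 2 (Fin k → ℝ)).symm x)
    ((WithLp.equiv 2 (Fin k → ℝ)).symm y)
  simpa [PiLp.inner_apply, RCLike.inner_apply, norm2_eq_norm, mul_comm] using this

lemma abs_cs {k : ℕ} (x y : Fin k → ℝ) : |∑ i, x i * y i| ≤ norm2 x * norm2 y := by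
  rw [abs_le]
  refine ⟨?_, cs x y⟩
  have h := cs (fun i => -(x i)) y
  have hn : norm2 (fun i => -(x i)) = norm2 x := by simp [norm2]
  simp only [neg_mul] at h
  rw [Finset.sum_neg_distrib, hn] at h
  linarith

lemma norm2_zero {k : ℕ} : norm2 (0 : Fin k → ℝ) = 0 := by simp [norm2]

lemma norm2_eq_zero {k : ℕ} {x : Fin k → ℝ} (h : norm2 x = 0) : x = 0 := by
  simp only [norm2_eq_norm] at h
  exact congrArg (WithLp.equiv 2 (Fin k → ℝ)) (norm_eq_zero.mp h)

lemma sq_norm2 {k : ℕ} (x : Fin k → ℝ) : norm2 x ^ 2 = ∑ i, x i ^ 2 := by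
  simp [norm2, Real.sq_sqrt (Finset.sum_nonneg fun i _ => sq_nonneg (x i))]

lemma norm2_le_of_sq_le {k : ℕ} {x : Fin k → ℝ} {c : ℝ} (hc : 0 ≤ c)
    (h : ∑ i, x i ^ 2 ≤ c ^ 2) : norm2 x ≤ c := by
  rw [norm2, ← Real.sqrt_sq hc]
  exact Real.sqrt_le_sqrt h

lemma spec_bddAbove {n m : ℕ} (Δ : Matrix (Fin n) (Fin m) ℝ) :
    BddAbove {t : ℝ | ∃ x : Fin m → ℝ, norm2 x ≤ 1 ∧ t = norm2 (Δ.mulVec x)} := by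
  refine ⟨Real.sqrt (∑ i, ∑ j, Δ i j ^ 2), ?_⟩
  rintro t ⟨x, hx, rfl⟩
  refine norm2_le_of_sq_le (Real.sqrt_nonneg _) ?_
  rw [Real.sq_sqrt (by positivity)]
  refine Finset.sum_le_sum fun i _ => ?_
  have h1 : (Δ.mulVec x) i = ∑ j, Δ i j * x j := rfl
  have h3 : |∑ j, Δ i j * x j| ≤ norm2 (fun j => Δ i j) * norm2 x := abs_cs _ _
  calc (Δ.mulVec x) i ^ 2 = |∑ j, Δ i j * x j| ^ 2 := by rw [h1, sq_abs]
    _ ≤ (norm2 (fun j => Δ i j) * norm2 x) ^ 2 := pow_le_pow_left₀ (abs_nonneg _) h3 2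
    _ ≤ (norm2 (fun j => Δ i j)) ^ 2 * 1 := by
        rw [mul_pow]
        exact mul_le_mul_of_nonneg_left (by nlinarith [norm2_nonneg x]) (sq_nonneg _)
    _ = ∑ j, Δ i j ^ 2 := by rw [mul_one, sq_norm2]

lemma spec_nonneg {n m : ℕ} (Δ : Matrix (Fin n) (Fin m) ℝ) : 0 ≤ specNorm Δ := by
  have h0 : (0:ℝ) ∈ {t : ℝ | ∃ x : Fin m → ℝ, norm2 x ≤ 1 ∧ t = norm2 (Δ.mulVec x)} :=
    ⟨0, by simp [norm2_zero], by simp [Matrix.mulVec_zero, norm2_zero]⟩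
  exact le_csSup (spec_bddAbove Δ) h0

lemma mulVec_norm_le {n m : ℕ} (Δ : Matrix (Fin n) (Fin m) ℝ) (x : Fin m → ℝ) :
    norm2 (Δ.mulVec x) ≤ specNorm Δ * norm2 x := by
  rcases eq_or_lt_of_le (norm2_nonneg x) with h | h
  · have hx : x = 0 := norm2_eq_zero h.symm
    simp [hx, Matrix.mulVec_zero, norm2_zero]
  · set c := norm2 x with hc
    have hmem : norm2 (Δ.mulVec (c⁻¹ • x)) ∈
        {t : ℝ | ∃ x : Fin m → ℝ, norm2 x ≤ 1 ∧ t = norm2 (Δ.mulVec x)} := by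
      refine ⟨c⁻¹ • x, ?_, rfl⟩
      rw [norm2_smul, abs_of_pos (inv_pos.mpr h), ← hc, inv_mul_cancel₀ (ne_of_gt h)]
    have hle : norm2 (Δ.mulVec (c⁻¹ • x)) ≤ specNorm Δ := le_csSup (spec_bddAbove Δ) hmem
    rw [Matrix.mulVec_smul, norm2_smul, abs_of_pos (inv_pos.mpr h)] at hle
    calc norm2 (Δ.mulVec x) = c * (c⁻¹ * norm2 (Δ.mulVec x)) := by field_simp
      _ ≤ c * specNorm Δ := mul_le_mul_of_nonneg_left hle (le_of_lt h)
      _ = specNorm Δ * c := mul_comm _ _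

lemma swap_id {n m : ℕ} (Δ : Matrix (Fin n) (Fin m) ℝ) (w : Fin n → ℝ) (u : Fin m → ℝ) :
    ∑ j, u j * (Δᵀ.mulVec w) j = ∑ i, w i * (Δ.mulVec u) i := by
  simp only [Matrix.mulVec, dotProduct, Matrix.transpose_apply, Finset.mul_sum]
  rw [Finset.sum_comm]
  congr 1; funext i; congr 1; funext j; ring

lemma transpose_bound {n m : ℕ} (Δ : Matrix (Fin n) (Fin m) ℝ) (w : Fin n → ℝ) :
    norm2 (Δᵀ.mulVec w) ≤ specNorm Δ * norm2 w := by
  set u := Δᵀ.mulVec w with hu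
  set t := norm2 u with ht
  rcases eq_or_lt_of_le (norm2_nonneg u) with h | h
  · have ht0 : t = 0 := h.symm
    rw [ht0]
    exact mul_nonneg (spec_nonneg Δ) (norm2_nonneg w)
  · have hsq : t ^ 2 = ∑ j, u j * u j := by
      rw [ht, sq_norm2]; congr 1; funext j; ring
    have h1 : ∑ j, u j * (Δᵀ.mulVec w) j = ∑ i, w i * (Δ.mulVec u) i := swap_id Δ w u
    have h2 : ∑ i, w i * (Δ.mulVec u) i ≤ norm2 w * norm2 (Δ.mulVec u) := cs _ _
    have h3 : norm2 (Δ.mulVec u) ≤ specNorm Δ * t := by rw [ht]; exact mulVec_norm_le Δ u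
    have h4 : t ^ 2 ≤ norm2 w * (specNorm Δ * t) := by
      rw [hsq]
      calc ∑ j, u j * u j = ∑ i, w i * (Δ.mulVec u) i := by rw [← hu] at h1; exact h1
        _ ≤ norm2 w * norm2 (Δ.mulVec u) := h2
        _ ≤ norm2 w * (specNorm Δ * t) :=
            mul_le_mul_of_nonneg_left h3 (norm2_nonneg w)
    nlinarith [norm2_nonneg w, spec_nonneg Δ]

lemma residual_split {n m : ℕ} (Xh Δ : Matrix (Fin n) (Fin m) ℝ) (w : Fin n → ℝ)
    (y : Fin m → ℝ) :
    (Xh + Δ)ᵀ.mulVec w - y = (Xhᵀ.mulVec w - y) + Δᵀ.mulVec w := by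
  rw [Matrix.transpose_add, Matrix.add_mulVec]
  funext j; simp; ring

/-- key pointwise identity for `m ≥ 1` -/
lemma sup_eq {n m : ℕ} (hm : 0 < m) (Xh : Matrix (Fin n) (Fin m) ℝ) (y : Fin m → ℝ)
    (ε : ℝ) (hε : 0 ≤ ε) (w : Fin n → ℝ) :
    sSup {r : ℝ | ∃ Δ : Matrix (Fin n) (Fin m) ℝ,
        specNorm Δ ≤ ε ∧ r = norm2 ((Xh + Δ)ᵀ.mulVec w - y)} =
      norm2 (Xhᵀ.mulVec w - y) + ε * norm2 w := by
  set r0 := Xhᵀ.mulVec w - y with hr0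
  set R := norm2 r0 with hR
  set W := norm2 w with hW
  have hRn : 0 ≤ R := norm2_nonneg _
  have hWn : 0 ≤ W := norm2_nonneg _
  have hub : ∀ r ∈ {r : ℝ | ∃ Δ : Matrix (Fin n) (Fin m) ℝ,
      specNorm Δ ≤ ε ∧ r = norm2 ((Xh + Δ)ᵀ.mulVec w - y)}, r ≤ R + ε * W := by
    rintro r ⟨Δ, hΔ, rfl⟩
    rw [residual_split, ← hr0]
    calc norm2 (r0 + Δᵀ.mulVec w) ≤ norm2 r0 + norm2 (Δᵀ.mulVec w) := norm2_add_le _ _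
      _ ≤ R + specNorm Δ * W := add_le_add le_rfl (transpose_bound Δ w)
      _ ≤ R + ε * W := add_le_add le_rfl (mul_le_mul_of_nonneg_right hΔ hWn)
  refine le_antisymm (Real.sSup_le hub (by positivity)) ?_
  -- lower bound: construct the worst-case Δ
  rcases eq_or_ne w 0 with hw | hw
  · -- w = 0 : take Δ = 0
    have hmem : R + ε * W ∈ {r : ℝ | ∃ Δ : Matrix (Fin n) (Fin m) ℝ,
        specNorm Δ ≤ ε ∧ r = norm2 ((Xh + Δ)ᵀ.mulVec w - y)} := by
      refine ⟨0, ?_, ?_⟩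
      · refine Real.sSup_le ?_ hε
        rintro t ⟨x, hx, rfl⟩
        simp [Matrix.zero_mulVec, norm2_zero, hε]
      · rw [hW, hw, norm2_zero, mul_zero, add_zero, hR, hr0, hw]
        simp
    exact le_csSup ⟨R + ε * W, hub⟩ hmem
  · have hWpos : 0 < W := by
      rcases eq_or_lt_of_le hWn with h | h
      · exact absurd (norm2_eq_zero h.symm) hw
      · exact h
    -- choose unit vector v with v ⬝ r0 = R
    obtain ⟨v, hv1, hv2⟩ : ∃ v : Fin m → ℝ, (∑ j, v j ^ 2 = 1) ∧ (∑ j, v j * r0 j = R) := by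
      rcases eq_or_lt_of_le hRn with h | h
      · refine ⟨fun j => if j = ⟨0, hm⟩ then 1 else 0, ?_, ?_⟩
        · simp [Finset.sum_ite_eq']
        · have : r0 = 0 := norm2_eq_zero h.symm
          simp [this, ← h]
      · refine ⟨R⁻¹ • r0, ?_, ?_⟩
        · have : ∑ j, (R⁻¹ • r0) j ^ 2 = R⁻¹ ^ 2 * ∑ j, r0 j ^ 2 := by
            rw [Finset.mul_sum]; congr 1; funext j; simp [Pi.smul_apply]; ring
          rw [this, ← sq_norm2, ← hR]
          field_simp
        · have : ∑ j, (R⁻¹ • r0) j * r0 j = R⁻¹ * ∑ j, r0 j ^ 2 := by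
            rw [Finset.mul_sum]; congr 1; funext j; simp [Pi.smul_apply]; ring
          rw [this, ← sq_norm2, ← hR]
          field_simp
    have hvnorm : norm2 v = 1 := by rw [norm2, hv1, Real.sqrt_one]
    set Δs : Matrix (Fin n) (Fin m) ℝ := Matrix.of fun i j => (ε / W) * w i * v j with hΔs
    have hspec : specNorm Δs ≤ ε := by
      refine Real.sSup_le ?_ hε
      rintro t ⟨x, hx, rfl⟩
      have hmv : Δs.mulVec x = ((ε / W) * ∑ j, v j * x j) • w := by
        funext i
        simp only [Matrix.mulVec, dotProduct, hΔs, Matrix.of_apply, Pi.smul_apply,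
          smul_eq_mul, Finset.mul_sum, Finset.sum_mul]
        exact Finset.sum_congr rfl fun j _ => by ring
      rw [hmv, norm2_smul, ← hW]
      have habs : |∑ j, v j * x j| ≤ 1 := by
        calc |∑ j, v j * x j| ≤ norm2 v * norm2 x := abs_cs _ _
          _ ≤ 1 * 1 := mul_le_mul (le_of_eq hvnorm) hx (norm2_nonneg x) zero_le_one
          _ = 1 := one_mul 1
      rw [abs_mul, abs_of_nonneg (div_nonneg hε (le_of_lt hWpos))]
      calc ε / W * |∑ j, v j * x j| * W ≤ ε / W * 1 * W := by
            refine mul_le_mul_of_nonneg_right ?_ (le_of_lt hWpos)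
            exact mul_le_mul_of_nonneg_left habs (div_nonneg hε (le_of_lt hWpos))
        _ = ε := by field_simp
    have hΔw : Δsᵀ.mulVec w = (ε * W) • v := by
      funext j
      simp only [Matrix.mulVec, dotProduct, Matrix.transpose_apply, hΔs,
        Matrix.of_apply, Pi.smul_apply, smul_eq_mul]
      have : ∑ i, ε / W * w i * v j * w i = (ε / W) * v j * ∑ i, w i ^ 2 := by
        rw [Finset.mul_sum]; congr 1; funext i; ring
      rw [this, ← sq_norm2, ← hW]
      have hW2 : W ≠ 0 := ne_of_gt hWpos
      field_simp
    have hres : norm2 ((Xh + Δs)ᵀ.mulVec w - y) = R + ε * W := by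
      rw [residual_split, ← hr0, hΔw]
      have hsq : ∑ j, (r0 + (ε * W) • v) j ^ 2 = (R + ε * W) ^ 2 := by
        have expand : ∀ j, (r0 + (ε * W) • v) j ^ 2
            = r0 j ^ 2 + 2 * (ε * W) * (v j * r0 j) + (ε * W) ^ 2 * v j ^ 2 := by
          intro j; simp [Pi.add_apply, Pi.smul_apply, smul_eq_mul]; ring
        rw [Finset.sum_congr rfl fun j _ => expand j]
        rw [Finset.sum_add_distrib, Finset.sum_add_distrib, ← Finset.mul_sum, ← Finset.mul_sum,
          hv1, hv2, ← sq_norm2, ← hR]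
        ring
      rw [norm2, hsq, Real.sqrt_sq (by positivity)]
    have hmem : R + ε * W ∈ {r : ℝ | ∃ Δ : Matrix (Fin n) (Fin m) ℝ,
        specNorm Δ ≤ ε ∧ r = norm2 ((Xh + Δ)ᵀ.mulVec w - y)} := ⟨Δs, hspec, hres.symm⟩
    exact le_csSup ⟨R + ε * W, hub⟩ hmem

end RobustLasso

open RobustLasso in
/-- The robust square-root LASSO `min_w max_{‖Δ‖ ≤ ε} ‖(X̂+Δ)ᵀw − y‖₂ + λ‖w‖₁` has the same
optimal value as the regularized problem `min_w ‖X̂ᵀw − y‖₂ + ε‖w‖₂ + λ‖w‖₁`. -/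
theorem robust_sqrt_lasso_eq_regularized
    {n m : ℕ} (Xh : Matrix (Fin n) (Fin m) ℝ) (y : Fin m → ℝ)
    (ε lam : ℝ) (hε : 0 ≤ ε) (hlam : 0 ≤ lam) :
    (⨅ w : Fin n → ℝ,
        (sSup {r : ℝ | ∃ Δ : Matrix (Fin n) (Fin m) ℝ,
            specNorm Δ ≤ ε ∧ r = norm2 ((Xh + Δ)ᵀ.mulVec w - y)} + lam * norm1 w)) =
      ⨅ w : Fin n → ℝ, (norm2 (Xhᵀ.mulVec w - y) + ε * norm2 w + lam * norm1 w) := by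
  rcases Nat.eq_zero_or_pos m with hm | hm
  · subst hm
    have hn0 : ∀ (x : Fin 0 → ℝ), norm2 x = 0 := by intro x; simp [norm2]
    have hsup0 : ∀ w : Fin n → ℝ, sSup {r : ℝ | ∃ Δ : Matrix (Fin n) (Fin 0) ℝ,
        specNorm Δ ≤ ε ∧ r = norm2 ((Xh + Δ)ᵀ.mulVec w - y)} = 0 := by
      intro w
      have hset : {r : ℝ | ∃ Δ : Matrix (Fin n) (Fin 0) ℝ,
          specNorm Δ ≤ ε ∧ r = norm2 ((Xh + Δ)ᵀ.mulVec w - y)} = {0} := by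
        ext r
        constructor
        · rintro ⟨Δ, _, rfl⟩; simp [hn0]
        · rintro rfl
          refine ⟨0, ?_, (hn0 _).symm⟩
          refine Real.sSup_le ?_ hε
          rintro t ⟨x, _, rfl⟩
          rw [Matrix.zero_mulVec, norm2_zero]; exact hε
      rw [hset, csSup_singleton]
    have hL : (⨅ w : Fin n → ℝ,
        (sSup {r : ℝ | ∃ Δ : Matrix (Fin n) (Fin 0) ℝ,
            specNorm Δ ≤ ε ∧ r = norm2 ((Xh + Δ)ᵀ.mulVec w - y)} + lam * norm1 w)) = 0 := by
      refine le_antisymm ?_ ?_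
      · have := ciInf_le (f := fun w : Fin n → ℝ =>
            sSup {r : ℝ | ∃ Δ : Matrix (Fin n) (Fin 0) ℝ,
              specNorm Δ ≤ ε ∧ r = norm2 ((Xh + Δ)ᵀ.mulVec w - y)} + lam * norm1 w)
          (⟨0, by
            rintro r ⟨w, rfl⟩
            dsimp only
            rw [hsup0 w, zero_add]
            have : 0 ≤ norm1 w := Finset.sum_nonneg fun i _ => abs_nonneg _
            positivity⟩) 0
        calc _ ≤ _ := this
          _ = 0 := by rw [hsup0]; simp [norm1]
      · refine le_ciInf fun w => ?_
        rw [hsup0]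
        simp only [zero_add]
        have : 0 ≤ norm1 w := Finset.sum_nonneg fun i _ => abs_nonneg _
        positivity
    have hR : (⨅ w : Fin n → ℝ,
        (norm2 (Xhᵀ.mulVec w - y) + ε * norm2 w + lam * norm1 w)) = 0 := by
      refine le_antisymm ?_ ?_
      · have := ciInf_le (f := fun w : Fin n → ℝ =>
            norm2 (Xhᵀ.mulVec w - y) + ε * norm2 w + lam * norm1 w)
          (⟨0, by
            rintro r ⟨w, rfl⟩
            have h1 : 0 ≤ norm1 w := Finset.sum_nonneg fun i _ => abs_nonneg _
            have h2 := norm2_nonneg (Xhᵀ.mulVec w - y)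
            have h3 := norm2_nonneg w
            positivity⟩) 0
        calc _ ≤ _ := this
          _ = 0 := by rw [hn0]; simp [norm2, norm1]
      · refine le_ciInf fun w => ?_
        have h1 : 0 ≤ norm1 w := Finset.sum_nonneg fun i _ => abs_nonneg _
        have h2 := norm2_nonneg (Xhᵀ.mulVec w - y)
        have h3 := norm2_nonneg w
        positivity
    rw [hL, hR]
  · exact iInf_congr fun w => by rw [sup_eq hm Xh y ε hε w]
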